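/- arXiv:2510.02536 — 8 statements merged into one kernel-verified Lean document; each statement's English description precedes it below -/
import Mathlib

section
/- With 𝒢 the admissibility germ associated to ordered bell-shaped fluxes f_l ≥ f_r, for all (u_l,u_r), (k_l,k_r) ∈ 𝒢 the dissipation inequality Φ_l(u_l,k_l) − Φ_r(u_r,k_r) ≥ 0 holds, where Φ_{l,r}(a,b) := sgn(a−b)(f_{l,r}(a) − f_{l,r}(b)) are the Kruzhkov entropy fluxes. -/
open Set

/-- The Kruzhkov entropy flux associated with a flux `g`. -/
noncomputable def KruzhkovFlux (g : ℝ → ℝ) (a b : ℝ) : ℝ :=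
  Real.sign (a - b) * (g a - g b)

/-- The admissibility germ `𝒢 = 𝒢₁ ∪ 𝒢₂ ∪ 𝒢₃`, described through the right flux
`fr`, its critical point `αr`, and the lower/upper inverse branches `Sm = S_l⁻`,
`Sp = S_l⁺` of the left flux. -/
def germ (fr Sm Sp : ℝ → ℝ) (αr : ℝ) : Set (ℝ × ℝ) :=
  {p | p.1 ∈ Set.Icc (0:ℝ) 1 ∧ p.2 ∈ Set.Icc (0:ℝ) 1 ∧
    ((p.2 ≤ αr ∧ p.1 = Sm (fr p.2)) ∨ (αr ≤ p.2 ∧ p.1 = Sp (fr p.2)) ∨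
     (αr < p.2 ∧ p.1 = Sm (fr p.2)))}

/-- The interface flux of Adimurthi–Jaffré–Gowda. -/
noncomputable def Fint (fl fr : ℝ → ℝ) (αl αr ul ur : ℝ) : ℝ :=
  min (fl (min ul αl)) (fr (max αr ur))

/-- The remainder term `ℛ`. -/
noncomputable def Rem (fl fr : ℝ → ℝ) (αl αr ul ur : ℝ) : ℝ :=
  |Fint fl fr αl αr ul ur - fl ul| + |Fint fl fr αl αr ul ur - fr ur|

private lemma sign_ge_neg_one (x : ℝ) : -1 ≤ Real.sign x := by
  rcases lt_trichotomy x 0 with h | h | h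
  · rw [Real.sign_of_neg h]
  · simp [h]
  · rw [Real.sign_of_pos h]; norm_num

private lemma sign_le_one (x : ℝ) : Real.sign x ≤ 1 := by
  rcases lt_trichotomy x 0 with h | h | h
  · rw [Real.sign_of_neg h]; norm_num
  · simp [h]
  · rw [Real.sign_of_pos h]

/-- Key monotonicity lemma: on the germ, `fr kr < fr ur` together with `kr < ur`
forces `kl < ul`. -/
private lemma germ_key
    (fl fr Sm Sp : ℝ → ℝ) (αl αr : ℝ)
    (hflmono : StrictMonoOn fl (Icc 0 αl))
    (hfranti : StrictAntiOn fr (Icc αr 1))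
    (hSm : ∀ y ∈ Icc 0 (fr αr), Sm y ∈ Icc 0 αl ∧ fl (Sm y) = y)
    (hSp : ∀ y ∈ Icc 0 (fr αr), Sp y ∈ Icc αl 1 ∧ fl (Sp y) = y)
    (ul ur kl kr : ℝ)
    (hu : (ul, ur) ∈ germ fr Sm Sp αr) (hk : (kl, kr) ∈ germ fr Sm Sp αr)
    (hy : fr ur ∈ Icc 0 (fr αr)) (hz : fr kr ∈ Icc 0 (fr αr))
    (hfr : fr kr < fr ur) (hrr : kr < ur) : kl < ul := by
  obtain ⟨hu1, hu2, hu3⟩ := hu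
  obtain ⟨hk1, hk2, hk3⟩ := hk
  -- u's left state is either Sm (fr ur) (branches 1,3) or Sp (fr ur) with αr ≤ ur
  have hucase : ul = Sm (fr ur) ∨ (αr ≤ ur ∧ ul = Sp (fr ur)) := by
    rcases hu3 with ⟨_, h⟩ | ⟨h1, h2⟩ | ⟨_, h⟩
    · exact Or.inl h
    · exact Or.inr ⟨h1, h2⟩
    · exact Or.inl h
  have hkcase : kl = Sm (fr kr) ∨ (αr ≤ kr ∧ kl = Sp (fr kr)) := by
    rcases hk3 with ⟨_, h⟩ | ⟨h1, h2⟩ | ⟨_, h⟩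
    · exact Or.inl h
    · exact Or.inr ⟨h1, h2⟩
    · exact Or.inl h
  rcases hkcase with hkl | ⟨hkα, hkl⟩
  · -- kl = Sm (fr kr)
    rcases hucase with hul | ⟨_, hul⟩
    · -- both on lower branch: use strict mono of fl via injectivity of Sm values
      subst hul hkl
      by_contra hle
      push_neg at hle
      -- Sm (fr ur) ≤ Sm (fr kr)
      have h1 := hSm _ hy
      have h2 := hSm _ hz
      -- fl monotone on the values: need fl (Sm y) = y etc.
      rcases lt_or_eq_of_le hle with hlt | heq
      · -- Sm (fr ur) < Sm (fr kr); fl strictly mono on [0,αl] gives fr ur < fr kr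
        have := hflmono h1.1 h2.1 hlt
        rw [h1.2, h2.2] at this
        linarith
      · have : fr ur = fr kr := by rw [← h1.2, ← h2.2, heq]
        linarith
    · -- ul = Sp (fr ur) ∈ [αl,1], kl = Sm (fr kr) ∈ [0,αl]
      have h1 := hSp _ hy
      have h2 := hSm _ hz
      have : kl ≤ ul := by rw [hul, hkl]; exact le_trans h2.1.2 h1.1.1
      rcases lt_or_eq_of_le this with h | h
      · exact h
      · exfalso
        have : fr kr = fr ur := by
          rw [← h2.2, ← h1.2, hkl, hul] at *
          rw [h]
        linarith
  · -- kl = Sp (fr kr), αr ≤ kr : then ur > kr ≥ αr, fr strictly anti gives contradiction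
    exfalso
    have : fr ur < fr kr :=
      hfranti ⟨hkα, hk2.2⟩ ⟨le_trans hkα (le_of_lt hrr), hu2.2⟩ hrr
    linarith

/-- Dissipativity of the germ: `Φ_l(u_l,k_l) − Φ_r(u_r,k_r) ≥ 0` on `𝒢 × 𝒢`. -/
theorem germ_dissipative
    (fl fr Sm Sp : ℝ → ℝ) (αl αr : ℝ)
    (hαl : αl ∈ Ioo (0:ℝ) 1) (hαr : αr ∈ Ioo (0:ℝ) 1)
    (hflLip : ∃ K, LipschitzOnWith K fl (Icc 0 1))
    (hfrLip : ∃ K, LipschitzOnWith K fr (Icc 0 1))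
    (hflconc : StrictConcaveOn ℝ (Icc 0 1) fl)
    (hfrconc : StrictConcaveOn ℝ (Icc 0 1) fr)
    (hfl0 : fl 0 = 0) (hfl1 : fl 1 = 0) (hfr0 : fr 0 = 0) (hfr1 : fr 1 = 0)
    (hflpos : ∀ x ∈ Icc (0:ℝ) 1, 0 ≤ fl x)
    (hfrpos : ∀ x ∈ Icc (0:ℝ) 1, 0 ≤ fr x)
    (hflmono : StrictMonoOn fl (Icc 0 αl)) (hflanti : StrictAntiOn fl (Icc αl 1))
    (hfrmono : StrictMonoOn fr (Icc 0 αr)) (hfranti : StrictAntiOn fr (Icc αr 1))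
    (hord : ∀ x ∈ Icc (0:ℝ) 1, fr x ≤ fl x)
    (hSm : ∀ y ∈ Icc 0 (fr αr), Sm y ∈ Icc 0 αl ∧ fl (Sm y) = y)
    (hSp : ∀ y ∈ Icc 0 (fr αr), Sp y ∈ Icc αl 1 ∧ fl (Sp y) = y)
    (ul ur kl kr : ℝ)
    (hu : (ul, ur) ∈ germ fr Sm Sp αr) (hk : (kl, kr) ∈ germ fr Sm Sp αr) :
    0 ≤ KruzhkovFlux fl ul kl - KruzhkovFlux fr ur kr := by
  have hmax : ∀ x ∈ Icc (0:ℝ) 1, fr x ≤ fr αr := by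
    intro x hx
    rcases le_total x αr with h | h
    · exact hfrmono.monotoneOn ⟨hx.1, h⟩ ⟨hαr.1.le, le_rfl⟩ h
    · exact hfranti.antitoneOn ⟨le_rfl, hαr.2.le⟩ ⟨h, hx.2⟩ h
  have hu' := hu
  have hk' := hk
  simp only [germ, Set.mem_setOf_eq] at hu' hk'
  obtain ⟨hu1, hu2, hu3⟩ := hu'
  obtain ⟨hk1, hk2, hk3⟩ := hk'
  have hy : fr ur ∈ Icc 0 (fr αr) := ⟨hfrpos ur hu2, hmax ur hu2⟩
  have hz : fr kr ∈ Icc 0 (fr αr) := ⟨hfrpos kr hk2, hmax kr hk2⟩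
  have hflu : fl ul = fr ur := by
    rcases hu3 with ⟨_, h⟩ | ⟨_, h⟩ | ⟨_, h⟩
    · rw [h]; exact (hSm _ hy).2
    · rw [h]; exact (hSp _ hy).2
    · rw [h]; exact (hSm _ hy).2
  have hflk : fl kl = fr kr := by
    rcases hk3 with ⟨_, h⟩ | ⟨_, h⟩ | ⟨_, h⟩
    · rw [h]; exact (hSm _ hz).2
    · rw [h]; exact (hSp _ hz).2
    · rw [h]; exact (hSm _ hz).2
  unfold KruzhkovFlux
  rw [hflu, hflk]
  rcases lt_trichotomy (fr kr) (fr ur) with hD | hD | hD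
  · rcases lt_trichotomy kr ur with hr | hr | hr
    · have hl := germ_key fl fr Sm Sp αl αr hflmono hfranti hSm hSp
        ul ur kl kr hu hk hy hz hD hr
      rw [Real.sign_of_pos (by linarith : (0:ℝ) < ul - kl),
        Real.sign_of_pos (by linarith : (0:ℝ) < ur - kr)]
      linarith
    · rw [hr] at hD; exact absurd hD (lt_irrefl _)
    · rw [Real.sign_of_neg (by linarith : ur - kr < 0)]
      have := sign_ge_neg_one (ul - kl)
      nlinarith
  · rw [hD]; simp
  · rcases lt_trichotomy ur kr with hr | hr | hr
    · have hl := germ_key fl fr Sm Sp αl αr hflmono hfranti hSm hSp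
        kl kr ul ur hk hu hz hy hD hr
      rw [Real.sign_of_neg (by linarith : ul - kl < 0),
        Real.sign_of_neg (by linarith : ur - kr < 0)]
      linarith
    · rw [hr] at hD; exact absurd hD (lt_irrefl _)
    · rw [Real.sign_of_pos (by linarith : (0:ℝ) < ur - kr)]
      have := sign_le_one (ul - kl)
      nlinarith
end

section
/- With 𝒢 the admissibility germ for ordered bell-shaped fluxes f_l ≥ f_r, the germ is maximal: if (u_l,u_r) ∈ [0,1]² satisfies f_l(u_l) = f_r(u_r) and Φ_l(u_l,k_l) − Φ_r(u_r,k_r) ≥ 0 for all (k_l,k_r) ∈ 𝒢, then (u_l,u_r) ∈ 𝒢. -/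
open Set

/-- Maximality of the germ. -/
theorem germ_maximal
    (fl fr Sm Sp : ℝ → ℝ) (αl αr : ℝ)
    (hαl : αl ∈ Ioo (0:ℝ) 1) (hαr : αr ∈ Ioo (0:ℝ) 1)
    (hflLip : ∃ K, LipschitzOnWith K fl (Icc 0 1))
    (hfrLip : ∃ K, LipschitzOnWith K fr (Icc 0 1))
    (hflconc : StrictConcaveOn ℝ (Icc 0 1) fl)
    (hfrconc : StrictConcaveOn ℝ (Icc 0 1) fr)
    (hfl0 : fl 0 = 0) (hfl1 : fl 1 = 0) (hfr0 : fr 0 = 0) (hfr1 : fr 1 = 0)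
    (hflpos : ∀ x ∈ Icc (0:ℝ) 1, 0 ≤ fl x)
    (hfrpos : ∀ x ∈ Icc (0:ℝ) 1, 0 ≤ fr x)
    (hflmono : StrictMonoOn fl (Icc 0 αl)) (hflanti : StrictAntiOn fl (Icc αl 1))
    (hfrmono : StrictMonoOn fr (Icc 0 αr)) (hfranti : StrictAntiOn fr (Icc αr 1))
    (hord : ∀ x ∈ Icc (0:ℝ) 1, fr x ≤ fl x)
    (hSm : ∀ y ∈ Icc 0 (fr αr), Sm y ∈ Icc 0 αl ∧ fl (Sm y) = y)
    (hSp : ∀ y ∈ Icc 0 (fr αr), Sp y ∈ Icc αl 1 ∧ fl (Sp y) = y)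
    (ul ur : ℝ) (hul : ul ∈ Icc (0:ℝ) 1) (hur : ur ∈ Icc (0:ℝ) 1)
    (hRH : fl ul = fr ur)
    (hdiss : ∀ kl kr : ℝ, (kl, kr) ∈ germ fr Sm Sp αr →
      0 ≤ KruzhkovFlux fl ul kl - KruzhkovFlux fr ur kr) :
    (ul, ur) ∈ germ fr Sm Sp αr := by
  have h0ur := hur.1
  have hur1 := hur.2
  have hy0 : 0 ≤ fr ur := hfrpos ur hur
  rcases le_or_gt ul αl with hle | hgt
  · -- ul on the increasing branch: ul = Sm (fr ur)
    have hy1 : fr ur ≤ fr αr := by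
      rcases le_or_gt ur αr with h | h
      · rcases eq_or_lt_of_le h with h' | h'
        · rw [h']
        · exact (hfrmono ⟨h0ur, h⟩ ⟨hαr.1.le, le_refl αr⟩ h').le
      · exact (hfranti ⟨le_refl αr, hαr.2.le⟩ ⟨h.le, hur1⟩ h).le
    obtain ⟨hSmem, hSeq⟩ := hSm (fr ur) ⟨hy0, hy1⟩
    have heq : Sm (fr ur) = ul :=
      hflmono.injOn hSmem ⟨hul.1, hle⟩ (by rw [hSeq, hRH])
    refine ⟨hul, hur, ?_⟩
    rcases le_or_gt ur αr with h | h
    · exact Or.inl ⟨h, heq.symm⟩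
    · exact Or.inr (Or.inr ⟨h, heq.symm⟩)
  · rcases le_or_gt αr ur with h | h
    · -- ul = Sp (fr ur)
      have hy1 : fr ur ≤ fr αr := by
        rcases eq_or_lt_of_le h with h' | h'
        · rw [← h']
        · exact (hfranti ⟨le_refl αr, hαr.2.le⟩ ⟨h, hur1⟩ h').le
      obtain ⟨hSmem, hSeq⟩ := hSp (fr ur) ⟨hy0, hy1⟩
      have heq : Sp (fr ur) = ul :=
        hflanti.injOn hSmem ⟨hgt.le, hul.2⟩ (by rw [hSeq, hRH])
      exact ⟨hul, hur, Or.inr (Or.inl ⟨h, heq.symm⟩)⟩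
    · -- bad case: ur < αr and ul > αl; contradiction with dissipativity
      exfalso
      set kr : ℝ := (ur + αr) / 2 with hkrdef
      have hk1 : ur < kr := by rw [hkrdef]; linarith
      have hk2 : kr < αr := by rw [hkrdef]; linarith
      have hkr0 : (0:ℝ) ≤ kr := by rw [hkrdef]; linarith [hαr.1.le]
      have hkr01 : kr ∈ Icc (0:ℝ) 1 := ⟨hkr0, by rw [hkrdef]; linarith [hαr.2.le]⟩
      have hfrk0 : 0 ≤ fr kr := hfrpos kr hkr01
      have hfrk : fr ur < fr kr := hfrmono ⟨h0ur, h.le⟩ ⟨hkr0, hk2.le⟩ hk1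
      have hfrk1 : fr kr ≤ fr αr :=
        (hfrmono ⟨hkr0, hk2.le⟩ ⟨hαr.1.le, le_refl αr⟩ hk2).le
      obtain ⟨hklmem, hkleq⟩ := hSm (fr kr) ⟨hfrk0, hfrk1⟩
      have hgerm : (Sm (fr kr), kr) ∈ germ fr Sm Sp αr :=
        ⟨⟨hklmem.1, hklmem.2.trans hαl.2.le⟩, hkr01, Or.inl ⟨hk2.le, rfl⟩⟩
      have hd := hdiss _ _ hgerm
      unfold KruzhkovFlux at hd
      rw [Real.sign_of_pos (by linarith [hklmem.2] : (0:ℝ) < ul - Sm (fr kr)),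
          Real.sign_of_neg (by linarith : ur - kr < 0), hkleq, hRH] at hd
      linarith
end

section
/- Define the interface flux F_int(u_l,u_r) := min{f_l(min(u_l,α_l)), f_r(max(α_r,u_r))} and the remainder ℛ(u_l,u_r) := |F_int(u_l,u_r) − f_l(u_l)| + |F_int(u_l,u_r) − f_r(u_r)|. Then for all (u_l,u_r) ∈ [0,1]², (u_l,u_r) belongs to the germ 𝒢 if and only if ℛ(u_l,u_r) = 0. -/
open Set

/-- Characterization of the germ through the remainder term: `(u_l,u_r) ∈ 𝒢 ↔ ℛ(u_l,u_r) = 0`. -/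
theorem germ_iff_remainder_eq_zero
    (fl fr Sm Sp : ℝ → ℝ) (αl αr : ℝ)
    (hαl : αl ∈ Ioo (0:ℝ) 1) (hαr : αr ∈ Ioo (0:ℝ) 1)
    (hflLip : ∃ K, LipschitzOnWith K fl (Icc 0 1))
    (hfrLip : ∃ K, LipschitzOnWith K fr (Icc 0 1))
    (hflconc : StrictConcaveOn ℝ (Icc 0 1) fl)
    (hfrconc : StrictConcaveOn ℝ (Icc 0 1) fr)
    (hfl0 : fl 0 = 0) (hfl1 : fl 1 = 0) (hfr0 : fr 0 = 0) (hfr1 : fr 1 = 0)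
    (hflpos : ∀ x ∈ Icc (0:ℝ) 1, 0 ≤ fl x)
    (hfrpos : ∀ x ∈ Icc (0:ℝ) 1, 0 ≤ fr x)
    (hflmono : StrictMonoOn fl (Icc 0 αl)) (hflanti : StrictAntiOn fl (Icc αl 1))
    (hfrmono : StrictMonoOn fr (Icc 0 αr)) (hfranti : StrictAntiOn fr (Icc αr 1))
    (hord : ∀ x ∈ Icc (0:ℝ) 1, fr x ≤ fl x)
    (hSm : ∀ y ∈ Icc 0 (fr αr), Sm y ∈ Icc 0 αl ∧ fl (Sm y) = y)
    (hSp : ∀ y ∈ Icc 0 (fr αr), Sp y ∈ Icc αl 1 ∧ fl (Sp y) = y)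
    (ul ur : ℝ) (hul : ul ∈ Icc (0:ℝ) 1) (hur : ur ∈ Icc (0:ℝ) 1) :
    (ul, ur) ∈ germ fr Sm Sp αr ↔ Rem fl fr αl αr ul ur = 0 := by

  obtain ⟨hαl0, hαl1⟩ := hαl
  obtain ⟨hαr0, hαr1⟩ := hαr
  have hαlI : αl ∈ Icc (0:ℝ) 1 := ⟨hαl0.le, hαl1.le⟩
  have hαrI : αr ∈ Icc (0:ℝ) 1 := ⟨hαr0.le, hαr1.le⟩
  have hflmax : ∀ x ∈ Icc (0:ℝ) 1, fl x ≤ fl αl := by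
    intro x hx
    rcases lt_trichotomy x αl with h | rfl | h
    · exact (hflmono ⟨hx.1, h.le⟩ ⟨hαl0.le, le_refl _⟩ h).le
    · exact le_refl _
    · exact (hflanti ⟨le_refl _, hαl1.le⟩ ⟨h.le, hx.2⟩ h).le
  have hfrmax : ∀ x ∈ Icc (0:ℝ) 1, fr x ≤ fr αr := by
    intro x hx
    rcases lt_trichotomy x αr with h | rfl | h
    · exact (hfrmono ⟨hx.1, h.le⟩ ⟨hαr0.le, le_refl _⟩ h).le
    · exact le_refl _
    · exact (hfranti ⟨le_refl _, hαr1.le⟩ ⟨h.le, hx.2⟩ h).le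
  have hyI : fr ur ∈ Icc 0 (fr αr) := ⟨hfrpos ur hur, hfrmax ur hur⟩
  have hrem : Rem fl fr αl αr ul ur = 0 ↔
      Fint fl fr αl αr ul ur = fl ul ∧ Fint fl fr αl αr ul ur = fr ur := by
    unfold Rem
    rw [add_eq_zero_iff_of_nonneg (abs_nonneg _) (abs_nonneg _), abs_eq_zero,
      abs_eq_zero, sub_eq_zero, sub_eq_zero]
  rw [hrem]
  constructor
  · rintro ⟨-, -, hg⟩
    have hcaseA : ul = Sm (fr ur) →
        Fint fl fr αl αr ul ur = fl ul ∧ Fint fl fr αl αr ul ur = fr ur := by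
      intro hul'
      obtain ⟨hSmI, hSmv⟩ := hSm (fr ur) hyI
      have hulαl : ul ≤ αl := hul' ▸ hSmI.2
      have h1 : fl (min ul αl) = fr ur := by rw [min_eq_left hulαl, hul', hSmv]
      have h2 : fr ur ≤ fr (max αr ur) := by
        rcases le_total ur αr with h | h
        · rw [max_eq_left h]; exact hfrmax ur hur
        · rw [max_eq_right h]
      have hF : Fint fl fr αl αr ul ur = fr ur := by
        unfold Fint; rw [h1]; exact min_eq_left h2
      refine ⟨?_, hF⟩
      rw [hF, hul', hSmv]
    rcases hg with ⟨-, hul'⟩ | ⟨hαrur, hul'⟩ | ⟨-, hul'⟩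
    · exact hcaseA hul'
    · replace hαrur : αr ≤ ur := hαrur
      replace hul' : ul = Sp (fr ur) := hul'
      obtain ⟨hSpI, hSpv⟩ := hSp (fr ur) hyI
      have hαlul : αl ≤ ul := hul' ▸ hSpI.1
      have h1 : fl (min ul αl) = fl αl := by rw [min_eq_right hαlul]
      have h2 : fr (max αr ur) = fr ur := by rw [max_eq_right hαrur]
      have h3 : fr ur ≤ fl αl := le_trans (hfrmax ur hur) (le_trans (hord αr hαrI) (hflmax αr hαrI))
      have hF : Fint fl fr αl αr ul ur = fr ur := by
        unfold Fint; rw [h1, h2]; exact min_eq_right h3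
      refine ⟨?_, hF⟩
      rw [hF, hul', hSpv]
    · exact hcaseA hul'
  · rintro ⟨hF1, hF2⟩
    have hflfr : fl ul = fr ur := by rw [← hF1, hF2]
    refine ⟨hul, hur, ?_⟩
    rcases le_or_gt ul αl with hulαl | hαlul
    · -- ul ≤ αl : ul = Sm (fr ur)
      obtain ⟨hSmI, hSmv⟩ := hSm (fr ur) hyI
      have heq : ul = Sm (fr ur) := by
        apply hflmono.injOn ⟨hul.1, hulαl⟩ hSmI
        rw [hSmv, hflfr]
      rcases le_or_gt ur αr with h | h
      · exact Or.inl ⟨h, heq⟩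
      · exact Or.inr (Or.inr ⟨h, heq⟩)
    · -- αl < ul
      have hmin : min ul αl = αl := min_eq_right hαlul.le
      have hlt : fl ul < fl αl := hflanti ⟨le_refl _, hαl1.le⟩ ⟨hαlul.le, hul.2⟩ hαlul
      have hFr : fr (max αr ur) = fr ur := by
        rcases min_cases (fl (min ul αl)) (fr (max αr ur)) with ⟨hc, -⟩ | ⟨hc, -⟩
        · exfalso
          have : Fint fl fr αl αr ul ur = fl αl := by unfold Fint; rw [hc, hmin]
          rw [hF1] at this; linarith
        · have : Fint fl fr αl αr ul ur = fr (max αr ur) := hc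
          rw [hF2] at this; exact this.symm
      have hαrur : αr ≤ ur := by
        by_contra h
        push_neg at h
        rw [max_eq_left h.le] at hFr
        have : fr ur < fr αr := hfrmono ⟨hur.1, h.le⟩ ⟨hαr0.le, le_refl _⟩ h
        linarith
      obtain ⟨hSpI, hSpv⟩ := hSp (fr ur) hyI
      have heq : ul = Sp (fr ur) := by
        apply hflanti.injOn ⟨hαlul.le, hul.2⟩ hSpI
        rw [hSpv, hflfr]
      exact Or.inr (Or.inl ⟨hαrur, heq⟩)
end

section
/- With F_int, ℛ, 𝒢, Φ_l, Φ_r as above, for all (u_l,u_r) ∈ [0,1]² and all (k_l,k_r) ∈ 𝒢, the inequality Φ_r(u_r,k_r) − Φ_l(u_l,k_l) ≤ ℛ(u_l,u_r) holds. -/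
open Set

/-- Approximate dissipativity: `Φ_r(u_r,k_r) − Φ_l(u_l,k_l) ≤ ℛ(u_l,u_r)` for `(k_l,k_r) ∈ 𝒢`. -/
theorem remainder_controls_dissipation
    (fl fr Sm Sp : ℝ → ℝ) (αl αr : ℝ)
    (hαl : αl ∈ Ioo (0:ℝ) 1) (hαr : αr ∈ Ioo (0:ℝ) 1)
    (hflLip : ∃ K, LipschitzOnWith K fl (Icc 0 1))
    (hfrLip : ∃ K, LipschitzOnWith K fr (Icc 0 1))
    (hflconc : StrictConcaveOn ℝ (Icc 0 1) fl)
    (hfrconc : StrictConcaveOn ℝ (Icc 0 1) fr)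
    (hfl0 : fl 0 = 0) (hfl1 : fl 1 = 0) (hfr0 : fr 0 = 0) (hfr1 : fr 1 = 0)
    (hflpos : ∀ x ∈ Icc (0:ℝ) 1, 0 ≤ fl x)
    (hfrpos : ∀ x ∈ Icc (0:ℝ) 1, 0 ≤ fr x)
    (hflmono : StrictMonoOn fl (Icc 0 αl)) (hflanti : StrictAntiOn fl (Icc αl 1))
    (hfrmono : StrictMonoOn fr (Icc 0 αr)) (hfranti : StrictAntiOn fr (Icc αr 1))
    (hord : ∀ x ∈ Icc (0:ℝ) 1, fr x ≤ fl x)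
    (hSm : ∀ y ∈ Icc 0 (fr αr), Sm y ∈ Icc 0 αl ∧ fl (Sm y) = y)
    (hSp : ∀ y ∈ Icc 0 (fr αr), Sp y ∈ Icc αl 1 ∧ fl (Sp y) = y)
    (ul ur kl kr : ℝ) (hul : ul ∈ Icc (0:ℝ) 1) (hur : ur ∈ Icc (0:ℝ) 1)
    (hk : (kl, kr) ∈ germ fr Sm Sp αr) :
    KruzhkovFlux fr ur kr - KruzhkovFlux fl ul kl ≤ Rem fl fr αl αr ul ur := by
  have kruz_ge : ∀ g : ℝ → ℝ, ∀ a b : ℝ, b ≤ a → KruzhkovFlux g a b = g a - g b := by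
    intro g a b h
    rcases eq_or_lt_of_le h with rfl | h
    · simp [KruzhkovFlux]
    · rw [KruzhkovFlux, Real.sign_of_pos (by linarith), one_mul]
  have kruz_le : ∀ g : ℝ → ℝ, ∀ a b : ℝ, a ≤ b → KruzhkovFlux g a b = g b - g a := by
    intro g a b h
    rcases eq_or_lt_of_le h with rfl | h
    · simp [KruzhkovFlux]
    · rw [KruzhkovFlux, Real.sign_of_neg (by linarith)]; ring
  simp only [germ, mem_setOf_eq] at hk
  obtain ⟨hkl01, hkr01, hgerm⟩ := hk
  have hcIcc : fr kr ∈ Icc 0 (fr αr) := by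
    refine ⟨hfrpos kr hkr01, ?_⟩
    rcases le_total kr αr with h | h
    · exact hfrmono.monotoneOn ⟨hkr01.1, h⟩ ⟨hαr.1.le, le_refl _⟩ h
    · exact hfranti.antitoneOn ⟨le_refl _, hαr.2.le⟩ ⟨h, hkr01.2⟩ h
  have hflkl : fl kl = fr kr := by
    rcases hgerm with ⟨_, h⟩ | ⟨_, h⟩ | ⟨_, h⟩
    · rw [h]; exact (hSm _ hcIcc).2
    · rw [h]; exact (hSp _ hcIcc).2
    · rw [h]; exact (hSm _ hcIcc).2
  have hkey : kl ≤ αl ∨ αr ≤ kr := by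
    rcases hgerm with ⟨_, h⟩ | ⟨h, _⟩ | ⟨h, _⟩
    · left; rw [h]; exact (hSm _ hcIcc).1.2
    · right; exact h
    · right; exact h.le
  simp only [Rem]
  set F := Fint fl fr αl αr ul ur with hFdef
  have hFA : F ≤ fl (min ul αl) := min_le_left _ _
  have hFB : F ≤ fr (max αr ur) := min_le_right _ _
  have habs1 : F - fl ul ≤ |F - fl ul| := le_abs_self _
  have habs1' : fl ul - F ≤ |F - fl ul| := by rw [abs_sub_comm]; exact le_abs_self _
  have habs2 : F - fr ur ≤ |F - fr ur| := le_abs_self _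
  have habs2' : fr ur - F ≤ |F - fr ur| := by rw [abs_sub_comm]; exact le_abs_self _
  rcases le_total ur kr with h1 | h1 <;> rcases le_total ul kl with h2 | h2
  · -- ur ≤ kr, ul ≤ kl : trivial case
    rw [kruz_le fr ur kr h1, kruz_le fl ul kl h2, hflkl]
    linarith
  · -- ur ≤ kr, kl ≤ ul : need fr kr ≤ F
    rw [kruz_le fr ur kr h1, kruz_ge fl ul kl h2, hflkl]
    have hcA : fr kr ≤ fl (min ul αl) := by
      rcases le_total kl αl with hk1 | hk1
      · rw [← hflkl]
        exact hflmono.monotoneOn ⟨hkl01.1, hk1⟩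
          ⟨le_min hul.1 hαl.1.le, min_le_right _ _⟩ (le_min h2 hk1)
      · rw [min_eq_right (hk1.trans h2), ← hflkl]
        exact hflanti.antitoneOn ⟨le_refl _, hαl.2.le⟩ ⟨hk1, hkl01.2⟩ hk1
    have hcB : fr kr ≤ fr (max αr ur) := by
      rcases le_total kr αr with hk1 | hk1
      · rw [max_eq_left (h1.trans hk1)]
        exact hfrmono.monotoneOn ⟨hkr01.1, hk1⟩ ⟨hαr.1.le, le_refl _⟩ hk1
      · exact hfranti.antitoneOn ⟨le_max_left _ _, max_le hαr.2.le hur.2⟩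
          ⟨hk1, hkr01.2⟩ (max_le hk1 h1)
    have hcF : fr kr ≤ F := le_min hcA hcB
    linarith
  · -- kr ≤ ur, ul ≤ kl : need F ≤ fr kr
    rw [kruz_ge fr ur kr h1, kruz_le fl ul kl h2, hflkl]
    have hFc : F ≤ fr kr := by
      rcases hkey with hk1 | hk1
      · have hmin : min ul αl = ul := min_eq_left (h2.trans hk1)
        have : fl ul ≤ fl kl :=
          hflmono.monotoneOn ⟨hul.1, h2.trans hk1⟩ ⟨hkl01.1, hk1⟩ h2
        rw [← hflkl]
        calc F ≤ fl (min ul αl) := hFA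
          _ = fl ul := by rw [hmin]
          _ ≤ fl kl := this
      · have hmax : max αr ur = ur := max_eq_right (hk1.trans h1)
        have : fr ur ≤ fr kr :=
          hfranti.antitoneOn ⟨hk1, hkr01.2⟩ ⟨hk1.trans h1, hur.2⟩ h1
        calc F ≤ fr (max αr ur) := hFB
          _ = fr ur := by rw [hmax]
          _ ≤ fr kr := this
    linarith
  · -- kr ≤ ur, kl ≤ ul : trivial case
    rw [kruz_ge fr ur kr h1, kruz_ge fl ul kl h2, hflkl]
    linarith
end

section
/- Consistency estimate for the interface flux: there exists μ > 0 such that for all k ∈ [0,1], all n ∈ ℕ and all j ∈ ℤ, |F_{j+1/2}^n(k,k) − f_j^n(k)| ≤ μ |w_{j+1}^n − w_j^n|. One may take μ = ‖α'‖_∞ · sup_{p,ω}|∂ρ f(p,ω)| + sup_p |f_max(p) − f_min(p)|. -/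
open Set

/-- The GARZ flux `f(ρ,w) = ρ((1-w)V_min(ρ) + w V_max(ρ))`. -/
noncomputable def flux (Vmin Vmax : ℝ → ℝ) (ρ w : ℝ) : ℝ :=
  ρ * ((1 - w) * Vmin ρ + w * Vmax ρ)

/-- The numerical interface flux `F_{j+1/2}ⁿ(u_l,u_r) = min{f_jⁿ(u_l ∧ α_jⁿ),
f_{j+1}ⁿ(α_{j+1}ⁿ ∨ u_r)}`, with `wl = w_jⁿ`, `wr = w_{j+1}ⁿ`. -/
noncomputable def interfaceFlux (Vmin Vmax α : ℝ → ℝ) (wl wr ul ur : ℝ) : ℝ :=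
  min (flux Vmin Vmax (min ul (α wl)) wl) (flux Vmin Vmax (max (α wr) ur) wr)

/-- Consistency estimate: `|F_{j+1/2}ⁿ(k,k) − f_jⁿ(k)| ≤ μ |w_{j+1}ⁿ − w_jⁿ|`. -/
theorem interface_flux_consistency
    (Vmin Vmax : ℝ → ℝ)
    (hVminLip : ∃ K, LipschitzOnWith K Vmin (Icc 0 1))
    (hVmaxLip : ∃ K, LipschitzOnWith K Vmax (Icc 0 1))
    (hVminPos : ∀ ρ ∈ Icc (0:ℝ) 1, 0 ≤ Vmin ρ)
    (hVmaxPos : ∀ ρ ∈ Icc (0:ℝ) 1, 0 ≤ Vmax ρ)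
    (hVminAnti : AntitoneOn Vmin (Icc 0 1))
    (hVmaxAnti : AntitoneOn Vmax (Icc 0 1))
    (hord : ∀ ρ ∈ Icc (0:ℝ) 1, Vmin ρ ≤ Vmax ρ)
    (hVmin1 : Vmin 1 = 0) (hVmax1 : Vmax 1 = 0)
    (hconc : ∀ ρ ∈ Icc (0:ℝ) 1, ∀ ω ∈ Icc (0:ℝ) 1,
      deriv (deriv (fun p => flux Vmin Vmax p ω)) ρ < 0)
    (α : ℝ → ℝ)
    (hαLip : ∃ K, LipschitzOnWith K α (Icc 0 1))
    (hαmem : ∀ ω ∈ Icc (0:ℝ) 1, α ω ∈ Icc (0:ℝ) 1)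
    (hαcrit : ∀ ω ∈ Icc (0:ℝ) 1, deriv (fun p => flux Vmin Vmax p ω) (α ω) = 0)
    (w : ℕ → ℤ → ℝ) (hw : ∀ n j, w n j ∈ Icc (0:ℝ) 1) :
    ∃ μ > 0, ∀ k ∈ Icc (0:ℝ) 1, ∀ (n : ℕ) (j : ℤ),
      |interfaceFlux Vmin Vmax α (w n j) (w n (j+1)) k k - flux Vmin Vmax k (w n j)|
        ≤ μ * |w n (j+1) - w n j| := by
  obtain ⟨Km, hKm⟩ := hVminLip
  obtain ⟨KM, hKM⟩ := hVmaxLip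
  have hVmin_cont : ContinuousOn Vmin (Icc 0 1) := hKm.continuousOn
  have hVmax_cont : ContinuousOn Vmax (Icc 0 1) := hKM.continuousOn
  have hflux_cont : ∀ ω : ℝ, ContinuousOn (fun p => flux Vmin Vmax p ω) (Icc 0 1) := by
    intro ω
    unfold flux
    exact continuousOn_id.mul ((continuousOn_const.mul hVmin_cont).add
      (continuousOn_const.mul hVmax_cont))
  have hVmax0 : 0 ≤ Vmax 0 := hVmaxPos 0 (by norm_num)
  -- bound on how the flux varies in w
  have hdiffw : ∀ ρ ∈ Icc (0:ℝ) 1, ∀ a b : ℝ,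
      |flux Vmin Vmax ρ a - flux Vmin Vmax ρ b| ≤ Vmax 0 * |a - b| := by
    intro ρ hρ a b
    have he : flux Vmin Vmax ρ a - flux Vmin Vmax ρ b = ρ * (a - b) * (Vmax ρ - Vmin ρ) := by
      unfold flux; ring
    rw [he, abs_mul, abs_mul]
    have h1 : |ρ| = ρ := abs_of_nonneg hρ.1
    have h2 : |Vmax ρ - Vmin ρ| = Vmax ρ - Vmin ρ := abs_of_nonneg (by linarith [hord ρ hρ])
    have h3 : Vmax ρ - Vmin ρ ≤ Vmax 0 := by
      have hA := hVmaxAnti (left_mem_Icc.mpr zero_le_one) hρ hρ.1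
      have hB := hVminPos ρ hρ
      linarith
    have h4 : (0:ℝ) ≤ |a - b| := abs_nonneg _
    rw [h1, h2]
    nlinarith [mul_nonneg (mul_nonneg (sub_nonneg.mpr hρ.2) h4)
        (sub_nonneg.mpr (hord ρ hρ)),
      mul_le_mul_of_nonneg_left h3 h4, hρ.1]
  -- unimodality of the flux with mode at α ω
  have hmono : ∀ ω ∈ Icc (0:ℝ) 1,
      MonotoneOn (fun p => flux Vmin Vmax p ω) (Icc 0 (α ω)) ∧
      AntitoneOn (fun p => flux Vmin Vmax p ω) (Icc (α ω) 1) := by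
    intro ω hω
    set f := fun p => flux Vmin Vmax p ω with hf
    set g := deriv f with hg
    have hαω := hαmem ω hω
    have hgdiff : ∀ x ∈ Icc (0:ℝ) 1, DifferentiableAt ℝ g x := by
      intro x hx
      by_contra h
      have h0 : deriv g x = 0 := deriv_zero_of_not_differentiableAt h
      have h1 : deriv g x < 0 := hconc x hx ω hω
      linarith
    have hgcont : ContinuousOn g (Icc 0 1) :=
      fun x hx => (hgdiff x hx).continuousAt.continuousWithinAt
    have hganti : StrictAntiOn g (Icc 0 1) := by
      apply strictAntiOn_of_deriv_neg (convex_Icc 0 1) hgcont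
      intro x hx
      rw [interior_Icc] at hx
      exact hconc x (Ioo_subset_Icc_self hx) ω hω
    have hg0 : g (α ω) = 0 := hαcrit ω hω
    constructor
    · apply StrictMonoOn.monotoneOn
      apply strictMonoOn_of_deriv_pos (convex_Icc 0 (α ω))
        ((hflux_cont ω).mono (Icc_subset_Icc le_rfl hαω.2))
      intro x hx
      rw [interior_Icc] at hx
      have hx1 : x ∈ Icc (0:ℝ) 1 := ⟨hx.1.le, hx.2.le.trans hαω.2⟩
      have := hganti hx1 hαω hx.2
      rw [hg0] at this
      exact this
    · apply StrictAntiOn.antitoneOn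
      apply strictAntiOn_of_deriv_neg (convex_Icc (α ω) 1)
        ((hflux_cont ω).mono (Icc_subset_Icc hαω.1 le_rfl))
      intro x hx
      rw [interior_Icc] at hx
      have hx1 : x ∈ Icc (0:ℝ) 1 := ⟨hαω.1.trans hx.1.le, hx.2.le⟩
      have := hganti hαω hx1 hx.1
      rw [hg0] at this
      linarith
  refine ⟨Vmax 0 + 1, by linarith, ?_⟩
  intro k hk n j
  set wl := w n j with hwl_def
  set wr := w n (j+1) with hwr_def
  have hwl : wl ∈ Icc (0:ℝ) 1 := hw n j
  have hwr : wr ∈ Icc (0:ℝ) 1 := hw n (j+1)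
  have hαl := hαmem wl hwl
  have hαr := hαmem wr hwr
  obtain ⟨hml, hal⟩ := hmono wl hwl
  obtain ⟨hmr, har⟩ := hmono wr hwr
  have hD0 : (0:ℝ) ≤ |wr - wl| := abs_nonneg _
  have hkwlwr : |flux Vmin Vmax k wl - flux Vmin Vmax k wr| ≤ Vmax 0 * |wr - wl| := by
    have := hdiffw k hk wl wr
    rwa [abs_sub_comm wl wr] at this
  have hk' := abs_le.mp hkwlwr
  have hr' := abs_le.mp (hdiffw (α wr) hαr wr wl)
  unfold interfaceFlux
  rcases le_total k (α wl) with h1 | h1 <;> rcases le_total (α wr) k with h2 | h2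
  · rw [min_eq_left h1, max_eq_right h2, abs_le]
    have hu := min_le_left (flux Vmin Vmax k wl) (flux Vmin Vmax k wr)
    have hl : flux Vmin Vmax k wl - Vmax 0 * |wr - wl| ≤
        min (flux Vmin Vmax k wl) (flux Vmin Vmax k wr) :=
      le_min (by nlinarith) (by linarith [hk'.2])
    constructor <;> nlinarith
  · rw [min_eq_left h1, max_eq_left h2, abs_le]
    have hu := min_le_left (flux Vmin Vmax k wl) (flux Vmin Vmax (α wr) wr)
    have hm : flux Vmin Vmax k wr ≤ flux Vmin Vmax (α wr) wr :=
      hmr ⟨hk.1, h2⟩ ⟨hαr.1, le_rfl⟩ h2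
    have hl : flux Vmin Vmax k wl - Vmax 0 * |wr - wl| ≤
        min (flux Vmin Vmax k wl) (flux Vmin Vmax (α wr) wr) :=
      le_min (by nlinarith) (by linarith [hk'.2])
    constructor <;> nlinarith
  · rw [min_eq_right h1, max_eq_right h2, abs_le]
    have hu := min_le_right (flux Vmin Vmax (α wl) wl) (flux Vmin Vmax k wr)
    have ha : flux Vmin Vmax k wl ≤ flux Vmin Vmax (α wl) wl :=
      hal ⟨le_rfl, hαl.2⟩ ⟨h1, hk.2⟩ h1
    have hl : flux Vmin Vmax k wl - Vmax 0 * |wr - wl| ≤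
        min (flux Vmin Vmax (α wl) wl) (flux Vmin Vmax k wr) :=
      le_min (by nlinarith) (by linarith [hk'.2])
    constructor <;> nlinarith [hk'.1]
  · rw [min_eq_right h1, max_eq_left h2, abs_le]
    have hu := min_le_right (flux Vmin Vmax (α wl) wl) (flux Vmin Vmax (α wr) wr)
    have ha : flux Vmin Vmax k wl ≤ flux Vmin Vmax (α wl) wl :=
      hal ⟨le_rfl, hαl.2⟩ ⟨h1, hk.2⟩ h1
    have ha2 : flux Vmin Vmax (α wr) wl ≤ flux Vmin Vmax k wl :=
      hal ⟨h1, hk.2⟩ ⟨h1.trans h2, hαr.2⟩ h2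
    have hm : flux Vmin Vmax k wr ≤ flux Vmin Vmax (α wr) wr :=
      hmr ⟨hk.1, h2⟩ ⟨hαr.1, le_rfl⟩ h2
    have hl : flux Vmin Vmax k wl - Vmax 0 * |wr - wl| ≤
        min (flux Vmin Vmax (α wl) wl) (flux Vmin Vmax (α wr) wr) :=
      le_min (by nlinarith) (by linarith [hk'.2])
    constructor <;> nlinarith [hr'.2]
end

section
/- Invariant region for the scheme: assume V_min(ρ) = V_max(ρ) for ρ ∈ [0,ε] (no-vacuum phase assumption) and the CFL condition λ·max{2,1/ε}·L ≤ 1. If ε ≤ u_j^n ≤ 1 and 0 ≤ w_j^n ≤ 1 for all j ∈ ℤ, then ε ≤ u_j^{n+1} ≤ 1 and 0 ≤ w_j^{n+1} ≤ 1 for all j ∈ ℤ, where u_j^{n+1} = H_j^n(u_{j-1}^n, u_j^n, u_{j+1}^n) and w_j^{n+1} = (1 − λ s_{j-1/2}^n) w_j^n + λ s_{j-1/2}^n w_{j-1}^n with s_{j-1/2}^n = F_{j-1/2}^n(u_{j-1}^n, u_j^n)/u_j^{n+1}. -/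
open Set

lemma abs_sub_le_of_deriv_bound (f : ℝ → ℝ) (L a b : ℝ) (hab : a ≤ b)
    (hc : ContinuousOn f (Icc a b))
    (hd : ∀ x ∈ Ioo a b, DifferentiableAt ℝ f x)
    (hb : ∀ x ∈ Ioo a b, |deriv f x| ≤ L) :
    |f b - f a| ≤ L * (b - a) := by
  rcases eq_or_lt_of_le hab with h | h
  · simp [← h]
  · obtain ⟨c, hcmem, hceq⟩ := exists_hasDerivAt_eq_slope f (deriv f) h hc
      (fun x hx => (hd x hx).hasDerivAt)
    have hba : (0:ℝ) < b - a := by linarith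
    have h1 : f b - f a = deriv f c * (b - a) := by
      field_simp at hceq
      linarith [hceq]
    rw [h1, abs_mul, abs_of_pos hba]
    exact mul_le_mul_of_nonneg_right (hb c hcmem) hba.le

lemma min_sub_min_le (a a' c : ℝ) (h : a ≤ a') : min a' c - min a c ≤ a' - a := by
  rcases le_total a' c with h1 | h1
  · rw [min_eq_left h1, min_eq_left (le_trans h h1)]
  · rcases le_total a c with h2 | h2
    · rw [min_eq_right h1, min_eq_left h2]; linarith
    · rw [min_eq_right h1, min_eq_right h2]; linarith

lemma max_sub_max_le (c b b' : ℝ) (h : b ≤ b') : max c b' - max c b ≤ b' - b := by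
  rcases le_total c b with h1 | h1
  · rw [max_eq_right h1, max_eq_right (le_trans h1 h)]
  · rcases le_total c b' with h2 | h2
    · rw [max_eq_right h2, max_eq_left h1]; linarith
    · rw [max_eq_left h2, max_eq_left h1]; linarith


/-- Invariant region of the scheme: if `ε ≤ u_jⁿ ≤ 1` and `0 ≤ w_jⁿ ≤ 1`, then
the updated values satisfy `ε ≤ u_j^{n+1} ≤ 1` and `0 ≤ w_j^{n+1} ≤ 1`. -/
theorem scheme_invariant_region
    (Vmin Vmax : ℝ → ℝ)
    (hVminLip : ∃ K, LipschitzOnWith K Vmin (Icc 0 1))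
    (hVmaxLip : ∃ K, LipschitzOnWith K Vmax (Icc 0 1))
    (hVminPos : ∀ ρ ∈ Icc (0:ℝ) 1, 0 ≤ Vmin ρ)
    (hVmaxPos : ∀ ρ ∈ Icc (0:ℝ) 1, 0 ≤ Vmax ρ)
    (hVminAnti : AntitoneOn Vmin (Icc 0 1))
    (hVmaxAnti : AntitoneOn Vmax (Icc 0 1))
    (hord : ∀ ρ ∈ Icc (0:ℝ) 1, Vmin ρ ≤ Vmax ρ)
    (hVmin1 : Vmin 1 = 0) (hVmax1 : Vmax 1 = 0)
    (hconc : ∀ ρ ∈ Icc (0:ℝ) 1, ∀ ω ∈ Icc (0:ℝ) 1,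
      deriv (deriv (fun p => flux Vmin Vmax p ω)) ρ < 0)
    (α : ℝ → ℝ)
    (hαLip : ∃ K, LipschitzOnWith K α (Icc 0 1))
    (hαmem : ∀ ω ∈ Icc (0:ℝ) 1, α ω ∈ Icc (0:ℝ) 1)
    (hαcrit : ∀ ω ∈ Icc (0:ℝ) 1, deriv (fun p => flux Vmin Vmax p ω) (α ω) = 0)
    (eps lam L : ℝ) (heps : eps ∈ Ioo (0:ℝ) 1) (hlam : 0 < lam)
    -- no-vacuum phase assumption: the two velocities coincide at low densities
    (hvac : ∀ ρ ∈ Icc (0:ℝ) eps, Vmin ρ = Vmax ρ)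
    (hLbound : ∀ ρ ∈ Icc (0:ℝ) 1, ∀ ω ∈ Icc (0:ℝ) 1,
      |deriv (fun p => flux Vmin Vmax p ω) ρ| ≤ L)
    -- CFL condition
    (hCFL : lam * max 2 (1 / eps) * L ≤ 1)
    (u w unew wnew : ℤ → ℝ) (s : ℤ → ℝ)
    (hu : ∀ j, u j ∈ Icc eps 1) (hw : ∀ j, w j ∈ Icc (0:ℝ) 1)
    (hunew : ∀ j, unew j = u j -
      lam * (interfaceFlux Vmin Vmax α (w j) (w (j+1)) (u j) (u (j+1)) -
             interfaceFlux Vmin Vmax α (w (j-1)) (w j) (u (j-1)) (u j)))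
    (hs : ∀ j, s j = interfaceFlux Vmin Vmax α (w (j-1)) (w j) (u (j-1)) (u j) / unew j)
    (hwnew : ∀ j, wnew j = (1 - lam * s j) * w j + lam * s j * w (j-1)) :
    ∀ j, unew j ∈ Icc eps 1 ∧ wnew j ∈ Icc (0:ℝ) 1 := by
  obtain ⟨heps0, heps1⟩ := heps
  obtain ⟨Kmin, hKmin⟩ := hVminLip
  obtain ⟨Kmax, hKmax⟩ := hVmaxLip
  have hL0 : 0 ≤ L := le_trans (abs_nonneg _)
    (hLbound 0 ⟨le_refl 0, by norm_num⟩ 0 ⟨le_refl 0, by norm_num⟩)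
  have hlam0 : 0 ≤ lam := hlam.le
  have h2lamL : 2 * (lam * L) ≤ 1 := by
    have h1 : lam * 2 * L ≤ lam * max 2 (1/eps) * L :=
      mul_le_mul_of_nonneg_right (mul_le_mul_of_nonneg_left (le_max_left _ _) hlam0) hL0
    linarith
  have hlamLeps : lam * L ≤ eps := by
    have h1 : lam * (1/eps) * L ≤ 1 :=
      le_trans (mul_le_mul_of_nonneg_right
        (mul_le_mul_of_nonneg_left (le_max_right _ _) hlam0) hL0) hCFL
    have h2 : lam * L / eps ≤ 1 := by
      calc lam * L / eps = lam * (1/eps) * L := by ring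
        _ ≤ 1 := h1
    exact (div_le_one heps0).mp h2
  -- continuity of the flux in ρ
  have hgcont : ∀ wv : ℝ, ContinuousOn (fun p => flux Vmin Vmax p wv) (Icc 0 1) := by
    intro wv
    have h1 : ContinuousOn Vmin (Icc 0 1) := hKmin.continuousOn
    have h2 : ContinuousOn Vmax (Icc 0 1) := hKmax.continuousOn
    simp only [flux]
    exact (continuousOn_id' _).mul
      ((continuousOn_const.mul h1).add (continuousOn_const.mul h2))
  -- the derivative is differentiable, hence continuous, and strictly decreasing
  have hDdiff : ∀ wv ∈ Icc (0:ℝ) 1, ∀ ρ ∈ Icc (0:ℝ) 1,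
      DifferentiableAt ℝ (deriv (fun p => flux Vmin Vmax p wv)) ρ :=
    fun wv hwm ρ hρ => differentiableAt_of_deriv_ne_zero (hconc ρ hρ wv hwm).ne
  have hDanti : ∀ wv ∈ Icc (0:ℝ) 1,
      StrictAntiOn (deriv (fun p => flux Vmin Vmax p wv)) (Icc 0 1) := by
    intro wv hwm
    apply strictAntiOn_of_deriv_neg (convex_Icc 0 1)
    · exact fun ρ hρ => (hDdiff wv hwm ρ hρ).continuousAt.continuousWithinAt
    · intro ρ hρ
      rw [interior_Icc] at hρ
      exact hconc ρ ⟨hρ.1.le, hρ.2.le⟩ wv hwm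
  have hDpos : ∀ wv ∈ Icc (0:ℝ) 1, ∀ ρ ∈ Icc (0:ℝ) 1, ρ < α wv →
      0 < deriv (fun p => flux Vmin Vmax p wv) ρ := by
    intro wv hwm ρ hρ hlt
    have h := hDanti wv hwm hρ (hαmem wv hwm) hlt
    rwa [hαcrit wv hwm] at h
  have hDneg : ∀ wv ∈ Icc (0:ℝ) 1, ∀ ρ ∈ Icc (0:ℝ) 1, α wv < ρ →
      deriv (fun p => flux Vmin Vmax p wv) ρ < 0 := by
    intro wv hwm ρ hρ hlt
    have h := hDanti wv hwm (hαmem wv hwm) hρ hlt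
    rwa [hαcrit wv hwm] at h
  have hgdiff : ∀ wv ∈ Icc (0:ℝ) 1, ∀ ρ ∈ Icc (0:ℝ) 1, ρ ≠ α wv →
      DifferentiableAt ℝ (fun p => flux Vmin Vmax p wv) ρ := by
    intro wv hwm ρ hρ hne
    rcases lt_or_gt_of_ne hne with h | h
    · exact differentiableAt_of_deriv_ne_zero (hDpos wv hwm ρ hρ h).ne'
    · exact differentiableAt_of_deriv_ne_zero (hDneg wv hwm ρ hρ h).ne
  -- Lipschitz bound for the flux
  have hgLipAux : ∀ wv ∈ Icc (0:ℝ) 1, ∀ a b : ℝ, 0 ≤ a → b ≤ 1 → a ≤ b → α wv ∉ Ioo a b →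
      |flux Vmin Vmax b wv - flux Vmin Vmax a wv| ≤ L * (b - a) := by
    intro wv hwm a b ha hb hab hnm
    have hsub : Icc a b ⊆ Icc (0:ℝ) 1 := Icc_subset_Icc ha hb
    refine abs_sub_le_of_deriv_bound _ L a b hab ((hgcont wv).mono hsub) ?_ ?_
    · intro x hx
      refine hgdiff wv hwm x (hsub (Ioo_subset_Icc_self hx)) ?_
      intro h
      exact hnm (h ▸ hx)
    · intro x hx
      exact hLbound x (hsub (Ioo_subset_Icc_self hx)) wv hwm
  have hgLip : ∀ wv ∈ Icc (0:ℝ) 1, ∀ a b : ℝ, 0 ≤ a → b ≤ 1 → a ≤ b →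
      |flux Vmin Vmax b wv - flux Vmin Vmax a wv| ≤ L * (b - a) := by
    intro wv hwm a b ha hb hab
    by_cases hm : α wv ∈ Ioo a b
    · have h1 := hgLipAux wv hwm a (α wv) ha (le_trans hm.2.le hb) hm.1.le
        (fun h => lt_irrefl _ h.2)
      have h2 := hgLipAux wv hwm (α wv) b (le_trans ha hm.1.le) hb hm.2.le
        (fun h => lt_irrefl _ h.1)
      calc |flux Vmin Vmax b wv - flux Vmin Vmax a wv|
          ≤ |flux Vmin Vmax b wv - flux Vmin Vmax (α wv) wv| +
            |flux Vmin Vmax (α wv) wv - flux Vmin Vmax a wv| := abs_sub_le _ _ _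
        _ ≤ L * (b - α wv) + L * (α wv - a) := add_le_add h2 h1
        _ = L * (b - a) := by ring
    · exact hgLipAux wv hwm a b ha hb hab hm
  -- monotonicity of the flux on both sides of the critical point
  have hgMono : ∀ wv ∈ Icc (0:ℝ) 1, MonotoneOn (fun p => flux Vmin Vmax p wv) (Icc 0 (α wv)) := by
    intro wv hwm
    have hα := hαmem wv hwm
    exact (strictMonoOn_of_deriv_pos (convex_Icc _ _)
      ((hgcont wv).mono (Icc_subset_Icc le_rfl hα.2))
      (fun ρ hρ => by
        rw [interior_Icc] at hρ
        exact hDpos wv hwm ρ ⟨hρ.1.le, le_trans hρ.2.le hα.2⟩ hρ.2)).monotoneOn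
  have hgAnti : ∀ wv ∈ Icc (0:ℝ) 1, AntitoneOn (fun p => flux Vmin Vmax p wv) (Icc (α wv) 1) := by
    intro wv hwm
    have hα := hαmem wv hwm
    exact (strictAntiOn_of_deriv_neg (convex_Icc _ _)
      ((hgcont wv).mono (Icc_subset_Icc hα.1 le_rfl))
      (fun ρ hρ => by
        rw [interior_Icc] at hρ
        exact hDneg wv hwm ρ ⟨le_trans hα.1 hρ.1.le, hρ.2.le⟩ hρ.1)).antitoneOn
  -- basic flux values
  have hflux1 : ∀ wv : ℝ, flux Vmin Vmax 1 wv = 0 := by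
    intro wv; simp [flux, hVmin1, hVmax1]
  have hfluxnn : ∀ ρ ∈ Icc (0:ℝ) 1, ∀ wv ∈ Icc (0:ℝ) 1, 0 ≤ flux Vmin Vmax ρ wv := by
    intro ρ hρ wv hwm
    have h : 0 ≤ (1 - wv) * Vmin ρ + wv * Vmax ρ :=
      add_nonneg (mul_nonneg (by linarith [hwm.2]) (hVminPos ρ hρ))
        (mul_nonneg hwm.1 (hVmaxPos ρ hρ))
    exact mul_nonneg hρ.1 h
  have hfluxleL : ∀ ρ ∈ Icc (0:ℝ) 1, ∀ wv ∈ Icc (0:ℝ) 1, flux Vmin Vmax ρ wv ≤ L := by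
    intro ρ hρ wv hwm
    have h := hgLip wv hwm ρ 1 hρ.1 le_rfl hρ.2
    rw [hflux1, zero_sub, abs_neg] at h
    calc flux Vmin Vmax ρ wv ≤ |flux Vmin Vmax ρ wv| := le_abs_self _
      _ ≤ L * (1 - ρ) := h
      _ ≤ L * 1 := mul_le_mul_of_nonneg_left (by linarith [hρ.1]) hL0
      _ = L := mul_one L
  have hgeps : ∀ wv : ℝ, flux Vmin Vmax eps wv = eps * Vmax eps := by
    intro wv
    have hv := hvac eps ⟨heps0.le, le_rfl⟩
    show eps * ((1 - wv) * Vmin eps + wv * Vmax eps) = eps * Vmax eps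
    rw [hv]; ring
  -- quantitative monotonicity of the interface flux in u_l
  have hFul : ∀ wl ∈ Icc (0:ℝ) 1, ∀ wr ur : ℝ, ∀ ul ∈ Icc (0:ℝ) 1, ∀ ul' ∈ Icc (0:ℝ) 1, ul ≤ ul' →
      interfaceFlux Vmin Vmax α wl wr ul ur ≤ interfaceFlux Vmin Vmax α wl wr ul' ur ∧
      interfaceFlux Vmin Vmax α wl wr ul' ur - interfaceFlux Vmin Vmax α wl wr ul ur
        ≤ L * (ul' - ul) := by
    intro wl hwl wr ur ul hul ul' hul' h
    have hα := hαmem wl hwl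
    have hmm : min ul (α wl) ≤ min ul' (α wl) := min_le_min h le_rfl
    have hm_mem : min ul (α wl) ∈ Icc 0 (α wl) := ⟨le_min hul.1 hα.1, min_le_right _ _⟩
    have hm'_mem : min ul' (α wl) ∈ Icc 0 (α wl) := ⟨le_min hul'.1 hα.1, min_le_right _ _⟩
    have hterm_mono : flux Vmin Vmax (min ul (α wl)) wl ≤ flux Vmin Vmax (min ul' (α wl)) wl :=
      hgMono wl hwl hm_mem hm'_mem hmm
    have hterm_lip : flux Vmin Vmax (min ul' (α wl)) wl - flux Vmin Vmax (min ul (α wl)) wl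
        ≤ L * (ul' - ul) := by
      have h1 := hgLip wl hwl (min ul (α wl)) (min ul' (α wl)) hm_mem.1
        (le_trans hm'_mem.2 hα.2) hmm
      have h2 : min ul' (α wl) - min ul (α wl) ≤ ul' - ul := min_sub_min_le ul ul' (α wl) h
      calc flux Vmin Vmax (min ul' (α wl)) wl - flux Vmin Vmax (min ul (α wl)) wl
          ≤ |flux Vmin Vmax (min ul' (α wl)) wl - flux Vmin Vmax (min ul (α wl)) wl| :=
            le_abs_self _
        _ ≤ L * (min ul' (α wl) - min ul (α wl)) := h1
        _ ≤ L * (ul' - ul) := mul_le_mul_of_nonneg_left h2 hL0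
    constructor
    · exact min_le_min hterm_mono le_rfl
    · have h3 := min_sub_min_le (flux Vmin Vmax (min ul (α wl)) wl)
        (flux Vmin Vmax (min ul' (α wl)) wl)
        (flux Vmin Vmax (max (α wr) ur) wr) hterm_mono
      unfold interfaceFlux
      linarith
  -- quantitative antitonicity of the interface flux in u_r
  have hFur : ∀ wl ul : ℝ, ∀ wr ∈ Icc (0:ℝ) 1, ∀ ur ∈ Icc (0:ℝ) 1, ∀ ur' ∈ Icc (0:ℝ) 1, ur ≤ ur' →
      interfaceFlux Vmin Vmax α wl wr ul ur' ≤ interfaceFlux Vmin Vmax α wl wr ul ur ∧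
      interfaceFlux Vmin Vmax α wl wr ul ur - interfaceFlux Vmin Vmax α wl wr ul ur'
        ≤ L * (ur' - ur) := by
    intro wl ul wr hwr ur hur ur' hur' h
    have hα := hαmem wr hwr
    have hmm : max (α wr) ur ≤ max (α wr) ur' := max_le_max le_rfl h
    have hm_mem : max (α wr) ur ∈ Icc (α wr) 1 := ⟨le_max_left _ _, max_le hα.2 hur.2⟩
    have hm'_mem : max (α wr) ur' ∈ Icc (α wr) 1 := ⟨le_max_left _ _, max_le hα.2 hur'.2⟩
    have hterm_anti : flux Vmin Vmax (max (α wr) ur') wr ≤ flux Vmin Vmax (max (α wr) ur) wr :=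
      hgAnti wr hwr hm_mem hm'_mem hmm
    have hterm_lip : flux Vmin Vmax (max (α wr) ur) wr - flux Vmin Vmax (max (α wr) ur') wr
        ≤ L * (ur' - ur) := by
      have h1 := hgLip wr hwr (max (α wr) ur) (max (α wr) ur') (le_trans hα.1 hm_mem.1)
        hm'_mem.2 hmm
      have h2 : max (α wr) ur' - max (α wr) ur ≤ ur' - ur := max_sub_max_le (α wr) ur ur' h
      calc flux Vmin Vmax (max (α wr) ur) wr - flux Vmin Vmax (max (α wr) ur') wr
          ≤ |flux Vmin Vmax (max (α wr) ur') wr - flux Vmin Vmax (max (α wr) ur) wr| := by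
            rw [abs_sub_comm]; exact le_abs_self _
        _ ≤ L * (max (α wr) ur' - max (α wr) ur) := h1
        _ ≤ L * (ur' - ur) := mul_le_mul_of_nonneg_left h2 hL0
    constructor
    · exact min_le_min le_rfl hterm_anti
    · have h3 : min (flux Vmin Vmax (min ul (α wl)) wl) (flux Vmin Vmax (max (α wr) ur) wr) -
          min (flux Vmin Vmax (min ul (α wl)) wl) (flux Vmin Vmax (max (α wr) ur') wr)
          ≤ flux Vmin Vmax (max (α wr) ur) wr - flux Vmin Vmax (max (α wr) ur') wr := by
        rw [min_comm (flux Vmin Vmax (min ul (α wl)) wl) (flux Vmin Vmax (max (α wr) ur) wr),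
          min_comm (flux Vmin Vmax (min ul (α wl)) wl) (flux Vmin Vmax (max (α wr) ur') wr)]
        exact min_sub_min_le _ _ _ hterm_anti
      unfold interfaceFlux
      linarith
  -- value of the interface flux at (1,1)
  have hF11 : ∀ wl ∈ Icc (0:ℝ) 1, ∀ wr ∈ Icc (0:ℝ) 1,
      interfaceFlux Vmin Vmax α wl wr 1 1 = 0 := by
    intro wl hwl wr hwr
    unfold interfaceFlux
    rw [max_eq_right (hαmem wr hwr).2, hflux1, min_eq_right]
    exact hfluxnn _ ⟨le_min zero_le_one (hαmem wl hwl).1, min_le_left _ _⟩ wl hwl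
  -- value of the interface flux at (eps,eps)
  have hFeps : ∀ wl ∈ Icc (0:ℝ) 1, ∀ wr ∈ Icc (0:ℝ) 1,
      interfaceFlux Vmin Vmax α wl wr eps eps = eps * Vmax eps := by
    intro wl hwl wr hwr
    have hαl := hαmem wl hwl
    have hαr := hαmem wr hwr
    unfold interfaceFlux
    rcases le_or_gt eps (α wl) with hcl | hcl
    · rw [min_eq_left hcl, hgeps wl]
      refine min_eq_left ?_
      rcases le_or_gt (α wr) eps with hcr | hcr
      · rw [max_eq_right hcr, hgeps wr]
      · rw [max_eq_left hcr.le]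
        have h := hgMono wr hwr (show eps ∈ Icc 0 (α wr) from ⟨heps0.le, hcr.le⟩)
          (show α wr ∈ Icc 0 (α wr) from ⟨hαr.1, le_rfl⟩) hcr.le
        simpa only [hgeps wr] using h
    · have hcr : α wr ≤ eps := by
        by_contra hcon
        push_neg at hcon
        set ρ := (α wl + eps)/2 with hρdef
        have hρ1 : α wl < ρ := by rw [hρdef]; linarith
        have hρ2 : ρ < eps := by rw [hρdef]; linarith
        have hρ0 : 0 < ρ := lt_of_le_of_lt hαl.1 hρ1
        have hρmem : ρ ∈ Icc (0:ℝ) 1 := ⟨hρ0.le, le_trans hρ2.le heps1.le⟩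
        have hDwl : deriv (fun p => flux Vmin Vmax p wl) ρ < 0 := hDneg wl hwl ρ hρmem hρ1
        have hDwr : 0 < deriv (fun p => flux Vmin Vmax p wr) ρ :=
          hDpos wr hwr ρ hρmem (lt_trans hρ2 hcon)
        have heqd : deriv (fun p => flux Vmin Vmax p wl) ρ =
            deriv (fun p => flux Vmin Vmax p wr) ρ := by
          apply Filter.EventuallyEq.deriv_eq
          filter_upwards [Ioo_mem_nhds hρ0 hρ2] with x hx
          have hv := hvac x ⟨hx.1.le, hx.2.le⟩
          show x * ((1 - wl) * Vmin x + wl * Vmax x) = x * ((1 - wr) * Vmin x + wr * Vmax x)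
          rw [hv]; ring
        linarith
      rw [max_eq_right hcr, hgeps wr, min_eq_right hcl.le]
      refine min_eq_right ?_
      have h := hgAnti wl hwl (show α wl ∈ Icc (α wl) 1 from ⟨le_rfl, hαl.2⟩)
        (show eps ∈ Icc (α wl) 1 from ⟨hcl.le, heps1.le⟩) hcl.le
      simpa only [hgeps wl] using h
  -- nonnegativity and upper bound of the interface flux
  have hFnn : ∀ wl ∈ Icc (0:ℝ) 1, ∀ wr ∈ Icc (0:ℝ) 1, ∀ ul ∈ Icc (0:ℝ) 1, ∀ ur ∈ Icc (0:ℝ) 1,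
      0 ≤ interfaceFlux Vmin Vmax α wl wr ul ur := by
    intro wl hwl wr hwr ul hul ur hur
    refine le_min (hfluxnn _ ⟨le_min hul.1 (hαmem wl hwl).1, le_trans (min_le_left _ _) hul.2⟩ wl hwl)
      (hfluxnn _ ⟨le_trans (hαmem wr hwr).1 (le_max_left _ _), max_le (hαmem wr hwr).2 hur.2⟩ wr hwr)
  have hFleL : ∀ wl ∈ Icc (0:ℝ) 1, ∀ wr ul ur : ℝ, ul ∈ Icc (0:ℝ) 1 →
      interfaceFlux Vmin Vmax α wl wr ul ur ≤ L := by
    intro wl hwl wr ul ur hul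
    refine le_trans (min_le_left _ _) (hfluxleL _ ?_ wl hwl)
    exact ⟨le_min hul.1 (hαmem wl hwl).1, le_trans (min_le_left _ _) hul.2⟩
  -- the density update stays in [eps,1]
  have hU : ∀ j, unew j ∈ Icc eps 1 := by
    intro j
    have hA := hu (j-1); have hB := hu j; have hC := hu (j+1)
    have hwA := hw (j-1); have hwB := hw j; have hwC := hw (j+1)
    have hA01 : u (j-1) ∈ Icc (0:ℝ) 1 := ⟨le_trans heps0.le hA.1, hA.2⟩
    have hB01 : u j ∈ Icc (0:ℝ) 1 := ⟨le_trans heps0.le hB.1, hB.2⟩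
    have hC01 : u (j+1) ∈ Icc (0:ℝ) 1 := ⟨le_trans heps0.le hC.1, hC.2⟩
    have heps01 : eps ∈ Icc (0:ℝ) 1 := ⟨heps0.le, heps1.le⟩
    have h101 : (1:ℝ) ∈ Icc (0:ℝ) 1 := ⟨zero_le_one, le_rfl⟩
    rw [hunew j]
    constructor
    · -- lower bound
      have q1 : interfaceFlux Vmin Vmax α (w j) (w (j+1)) (u j) (u (j+1)) ≤
          interfaceFlux Vmin Vmax α (w j) (w (j+1)) (u j) eps :=
        (hFur (w j) (u j) (w (j+1)) hwC eps heps01 (u (j+1)) hC01 hC.1).1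
      have q2 : interfaceFlux Vmin Vmax α (w j) (w (j+1)) (u j) eps -
          interfaceFlux Vmin Vmax α (w j) (w (j+1)) eps eps ≤ L * (u j - eps) :=
        (hFul (w j) hwB (w (j+1)) eps eps heps01 (u j) hB01 hB.1).2
      have q3 : interfaceFlux Vmin Vmax α (w (j-1)) (w j) eps (u j) ≤
          interfaceFlux Vmin Vmax α (w (j-1)) (w j) (u (j-1)) (u j) :=
        (hFul (w (j-1)) hwA (w j) (u j) eps heps01 (u (j-1)) hA01 hA.1).1
      have q4 : interfaceFlux Vmin Vmax α (w (j-1)) (w j) eps eps -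
          interfaceFlux Vmin Vmax α (w (j-1)) (w j) eps (u j) ≤ L * (u j - eps) :=
        (hFur (w (j-1)) eps (w j) hwB eps heps01 (u j) hB01 hB.1).2
      have e1 := hFeps (w j) hwB (w (j+1)) hwC
      have e2 := hFeps (w (j-1)) hwA (w j) hwB
      have q5 : interfaceFlux Vmin Vmax α (w j) (w (j+1)) (u j) (u (j+1)) -
          interfaceFlux Vmin Vmax α (w (j-1)) (w j) (u (j-1)) (u j)
          ≤ 2 * L * (u j - eps) := by linarith
      have q6 : lam * (interfaceFlux Vmin Vmax α (w j) (w (j+1)) (u j) (u (j+1)) -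
          interfaceFlux Vmin Vmax α (w (j-1)) (w j) (u (j-1)) (u j))
          ≤ lam * (2 * L * (u j - eps)) := mul_le_mul_of_nonneg_left q5 hlam0
      have q7 : lam * (2 * L * (u j - eps)) ≤ u j - eps := by
        calc lam * (2 * L * (u j - eps)) = (2 * (lam * L)) * (u j - eps) := by ring
          _ ≤ 1 * (u j - eps) := mul_le_mul_of_nonneg_right h2lamL (by linarith [hB.1])
          _ = u j - eps := one_mul _
      linarith
    · -- upper bound
      have q1 : interfaceFlux Vmin Vmax α (w j) (w (j+1)) (u j) 1 ≤
          interfaceFlux Vmin Vmax α (w j) (w (j+1)) (u j) (u (j+1)) :=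
        (hFur (w j) (u j) (w (j+1)) hwC (u (j+1)) hC01 1 h101 hC.2).1
      have q2 : interfaceFlux Vmin Vmax α (w j) (w (j+1)) 1 1 -
          interfaceFlux Vmin Vmax α (w j) (w (j+1)) (u j) 1 ≤ L * (1 - u j) :=
        (hFul (w j) hwB (w (j+1)) 1 (u j) hB01 1 h101 hB.2).2
      have q3 : interfaceFlux Vmin Vmax α (w (j-1)) (w j) (u (j-1)) (u j) ≤
          interfaceFlux Vmin Vmax α (w (j-1)) (w j) 1 (u j) :=
        (hFul (w (j-1)) hwA (w j) (u j) (u (j-1)) hA01 1 h101 hA.2).1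
      have q4 : interfaceFlux Vmin Vmax α (w (j-1)) (w j) 1 (u j) -
          interfaceFlux Vmin Vmax α (w (j-1)) (w j) 1 1 ≤ L * (1 - u j) :=
        (hFur (w (j-1)) 1 (w j) hwB (u j) hB01 1 h101 hB.2).2
      have e1 := hF11 (w j) hwB (w (j+1)) hwC
      have e2 := hF11 (w (j-1)) hwA (w j) hwB
      have q5 : -(2 * L * (1 - u j)) ≤
          interfaceFlux Vmin Vmax α (w j) (w (j+1)) (u j) (u (j+1)) -
          interfaceFlux Vmin Vmax α (w (j-1)) (w j) (u (j-1)) (u j) := by linarith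
      have q6 : lam * (-(2 * L * (1 - u j))) ≤
          lam * (interfaceFlux Vmin Vmax α (w j) (w (j+1)) (u j) (u (j+1)) -
          interfaceFlux Vmin Vmax α (w (j-1)) (w j) (u (j-1)) (u j)) :=
        mul_le_mul_of_nonneg_left q5 hlam0
      have q7 : lam * (2 * L * (1 - u j)) ≤ 1 - u j := by
        calc lam * (2 * L * (1 - u j)) = (2 * (lam * L)) * (1 - u j) := by ring
          _ ≤ 1 * (1 - u j) := mul_le_mul_of_nonneg_right h2lamL (by linarith [hB.2])
          _ = 1 - u j := one_mul _
      have q8 : lam * (-(2 * L * (1 - u j))) = -(lam * (2 * L * (1 - u j))) := by ring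
      linarith
  -- final assembly
  intro j
  refine ⟨hU j, ?_⟩
  have hUj := hU j
  have hA := hu (j-1); have hB := hu j
  have hwA := hw (j-1); have hwB := hw j
  have hA01 : u (j-1) ∈ Icc (0:ℝ) 1 := ⟨le_trans heps0.le hA.1, hA.2⟩
  have hB01 : u j ∈ Icc (0:ℝ) 1 := ⟨le_trans heps0.le hB.1, hB.2⟩
  have hF1nn : 0 ≤ interfaceFlux Vmin Vmax α (w (j-1)) (w j) (u (j-1)) (u j) :=
    hFnn (w (j-1)) hwA (w j) hwB (u (j-1)) hA01 (u j) hB01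
  have hF1L : interfaceFlux Vmin Vmax α (w (j-1)) (w j) (u (j-1)) (u j) ≤ L :=
    hFleL (w (j-1)) hwA (w j) (u (j-1)) (u j) hA01
  have hupos : 0 < unew j := lt_of_lt_of_le heps0 hUj.1
  have hsj : 0 ≤ s j := by
    rw [hs j]; exact div_nonneg hF1nn hupos.le
  have ht0 : 0 ≤ lam * s j := mul_nonneg hlam0 hsj
  have ht1 : lam * s j ≤ 1 := by
    rw [hs j, ← mul_div_assoc, div_le_one hupos]
    calc lam * interfaceFlux Vmin Vmax α (w (j-1)) (w j) (u (j-1)) (u j)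
        ≤ lam * L := mul_le_mul_of_nonneg_left hF1L hlam0
      _ ≤ eps := hlamLeps
      _ ≤ unew j := hUj.1
  rw [hwnew j]
  constructor
  · exact add_nonneg (mul_nonneg (by linarith) hwB.1) (mul_nonneg ht0 hwA.1)
  · nlinarith [hwB.1, hwB.2, hwA.1, hwA.2]
end

section
/- Discrete L¹ time-continuity: under the CFL condition with density bounded below by ε and interface fluxes bounded by L, the scheme update for w satisfies Σ_{|j|≤J} |w_j^{n+1} − w_j^n| Δx ≤ (L/ε) TV(w_o) Δt for every J, where TV(w_Δ(t^n)) ≤ TV(w_o). -/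
open Set

/-- Discrete `L¹` time-continuity of the transport update:
`Σ_{|j|≤J} |w_j^{n+1} − w_jⁿ| Δx ≤ (L/ε) · TV(w_o) · Δt`. -/
theorem transport_update_time_continuity
    (eps L dx dt TV0 : ℝ)
    (heps : 0 < eps) (hdx : 0 < dx) (hdt : 0 < dt) (hL : 0 ≤ L)
    (u w wnew s : ℤ → ℝ)
    (hu : ∀ j, u j ∈ Icc eps 1)
    (hw : ∀ j, w j ∈ Icc (0:ℝ) 1)
    (hs : ∀ j, s j ∈ Icc (0:ℝ) (L / eps))
    (hwnew : ∀ j, wnew j = (1 - (dt / dx) * s j) * w j + (dt / dx) * s j * w (j-1))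
    -- total variation of `(w_jⁿ)_j` is bounded by `TV(w_o)`
    (hTV : ∀ A : Finset ℤ, ∑ j ∈ A, |w j - w (j-1)| ≤ TV0) :
    ∀ J : ℕ, ∑ j ∈ Finset.Icc (-(J:ℤ)) (J:ℤ), |wnew j - w j| * dx ≤ (L / eps) * TV0 * dt := by
  intro J
  have hterm : ∀ j : ℤ, |wnew j - w j| * dx ≤ (L / eps) * dt * |w j - w (j-1)| := by
    intro j
    have hs0 := (hs j).1
    have hs1 := (hs j).2
    have h1 : wnew j - w j = (dt / dx) * s j * (w (j-1) - w j) := by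
      rw [hwnew j]; ring
    have h2 : |wnew j - w j| = (dt / dx) * s j * |w j - w (j-1)| := by
      rw [h1, abs_mul, abs_of_nonneg (mul_nonneg (by positivity) hs0), abs_sub_comm]
    rw [h2]
    have habs : (0:ℝ) ≤ |w j - w (j-1)| := abs_nonneg _
    have : (dt / dx) * s j * |w j - w (j-1)| * dx = dt * s j * |w j - w (j-1)| := by
      field_simp
    rw [this]
    have : dt * s j * |w j - w (j-1)| ≤ dt * (L / eps) * |w j - w (j-1)| := by
      apply mul_le_mul_of_nonneg_right _ habs
      exact mul_le_mul_of_nonneg_left hs1 hdt.le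
    linarith [this]
  calc ∑ j ∈ Finset.Icc (-(J:ℤ)) (J:ℤ), |wnew j - w j| * dx
      ≤ ∑ j ∈ Finset.Icc (-(J:ℤ)) (J:ℤ), (L / eps) * dt * |w j - w (j-1)| :=
        Finset.sum_le_sum fun j _ => hterm j
    _ = (L / eps) * dt * ∑ j ∈ Finset.Icc (-(J:ℤ)) (J:ℤ), |w j - w (j-1)| := by
        rw [Finset.mul_sum]
    _ ≤ (L / eps) * dt * TV0 := by
        apply mul_le_mul_of_nonneg_left (hTV _) (by positivity)
    _ = (L / eps) * TV0 * dt := by ring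
end

section
/- Flux-weighted jump bound at an interface: let f_j, f_{j+1} : [0,1] → ℝ be of the form f(·, w_j), f(·, w_{j+1}) for f(ρ,w) = ρ((1−w)V_min(ρ) + wV_max(ρ)). If ρ⁻, ρ⁺ ∈ [0,1] satisfy the Rankine-Hugoniot condition f_j(ρ⁻) = f_{j+1}(ρ⁺) and ∂ρ f_j does not change sign on the interval between ρ⁻ and ρ⁺, then |f_j(ρ⁻) − f_j(ρ⁺)| ≤ sup_{p∈[0,1]} |f_max(p) − f_min(p)| · |w_{j+1} − w_j|, where f_min(ρ) = ρV_min(ρ), f_max(ρ) = ρV_max(ρ). -/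
open Set

/-- Flux-weighted jump bound at an interface: under the Rankine–Hugoniot
condition `f_j(ρ⁻) = f_{j+1}(ρ⁺)` and sign-definiteness of `∂ρ f_j` between the
traces, `|f_j(ρ⁻) − f_j(ρ⁺)| ≤ sup_p |f_max(p) − f_min(p)| · |w_{j+1} − w_j|`. -/
theorem flux_jump_bound
    (Vmin Vmax : ℝ → ℝ)
    (hVminLip : ∃ K, LipschitzOnWith K Vmin (Icc 0 1))
    (hVmaxLip : ∃ K, LipschitzOnWith K Vmax (Icc 0 1))
    (wj wj1 : ℝ) (hwj : wj ∈ Icc (0:ℝ) 1) (hwj1 : wj1 ∈ Icc (0:ℝ) 1)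
    (ρm ρp : ℝ) (hρm : ρm ∈ Icc (0:ℝ) 1) (hρp : ρp ∈ Icc (0:ℝ) 1)
    -- Rankine–Hugoniot condition
    (hRH : flux Vmin Vmax ρm wj = flux Vmin Vmax ρp wj1)
    -- `∂ρ f_j` does not change sign between `ρ⁻` and `ρ⁺`
    (hsign : (∀ ξ ∈ uIcc ρm ρp, 0 ≤ deriv (fun p => flux Vmin Vmax p wj) ξ) ∨
             (∀ ξ ∈ uIcc ρm ρp, deriv (fun p => flux Vmin Vmax p wj) ξ ≤ 0)) :
    |flux Vmin Vmax ρm wj - flux Vmin Vmax ρp wj|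
      ≤ (⨆ p : Icc (0:ℝ) 1, |(p:ℝ) * Vmax p - (p:ℝ) * Vmin p|) * |wj1 - wj| := by
  -- Rewrite the jump via the Rankine–Hugoniot condition.
  have key : flux Vmin Vmax ρm wj - flux Vmin Vmax ρp wj
      = (ρp * Vmax ρp - ρp * Vmin ρp) * (wj1 - wj) := by
    rw [hRH]; unfold flux; ring
  rw [key, abs_mul]
  refine mul_le_mul_of_nonneg_right ?_ (abs_nonneg _)
  -- The family is bounded above since `Vmin`, `Vmax` are continuous on the
  -- compact set `Icc 0 1`.
  obtain ⟨K1, h1⟩ := hVminLip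
  obtain ⟨K2, h2⟩ := hVmaxLip
  have hcont : ContinuousOn (fun p : ℝ => |p * Vmax p - p * Vmin p|) (Icc 0 1) := by
    exact ((continuousOn_id.mul h2.continuousOn).sub
      (continuousOn_id.mul h1.continuousOn)).abs
  have hbdd : BddAbove (range (fun p : Icc (0:ℝ) 1 => |(p:ℝ) * Vmax p - (p:ℝ) * Vmin p|)) := by
    have := (isCompact_Icc (a := (0:ℝ)) (b := 1)).bddAbove_image hcont
    refine this.mono ?_
    rintro x ⟨p, rfl⟩
    exact ⟨p, p.2, rfl⟩
  exact le_ciSup hbdd ⟨ρp, hρp⟩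
end
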